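/- Let {ν} = {0 = ν^{(0)} ⊆ ν^{(1)} ⊆ ⋯ ⊆ ν^{(m)} ⊆ ν^{(m+1)} = λ} be a chain of partitions and set α_λ({ν};q) := ∏_{i=0}^{m} α_{ν^{(i+1)}}(ν^{(i)};q), so that for every prime p, α_λ({ν};p) is the number of chains of subgroups {e} ⊆ H^{(1)} ⊆ ⋯ ⊆ H^{(m)} ⊆ G in a finite abelian p-group G of type λ with H^{(i)} of type ν^{(i)} for all i. Then, as an identity of rational functions in q, q^{n(λ)} α_λ({ν}; q^{−1}) = q^{c(ν)} ∏_{i=1}^{m} ∏_{j≥1} [ (ν^{(i+1)})'_j − (ν^{(i)})'_{j+1} choose (ν^{(i)})'_j − (ν^{(i)})'_{j+1} ]_q, where c(ν) = Σ_{i=0}^{m} Σ_{j≥1} binom( (ν^{(i+1)})'_j − (ν^{(i)})'_j, 2 ). -/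

import Mathlib

namespace KHL

/-- `conjC l j` is the `j`-th part (1-based) of the conjugate of the partition `l`. -/
def conjC (l : List ℕ) (j : ℕ) : ℕ := (l.filter (fun x => j ≤ x)).length

/-- `nstat λ = n(λ) = Σ_{i≥1} (i-1)·λ_i`. -/
def nstat (l : List ℕ) : ℕ := ∑ i ∈ Finset.range l.length, i * l.getD i 0

/-- The Gaussian binomial coefficient `[n choose k]_q` as a polynomial in `ℤ[q]`. -/
noncomputable def qbinom : ℕ → ℕ → Polynomial ℤ
  | _, 0 => 1
  | 0, _ + 1 => 0
  | n + 1, k + 1 => qbinom n k + Polynomial.X ^ (k + 1) * qbinom n (k + 1)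

/-- The finset of all partitions of `n`, as weakly decreasing lists of positive integers. -/
noncomputable def partitionsOf (n : ℕ) : Finset (List ℕ) :=
  Finset.image (fun p : Nat.Partition n => (Multiset.sort p.parts (· ≤ ·)).reverse) Finset.univ

/-- The conjugate partition, as a list. -/
def conjList (l : List ℕ) : List ℕ := (List.range (l.headD 0)).map fun j => conjC l (j + 1)

/-- A semistandard Young tableau of shape `sh` (a partition, as a list of row lengths);
entries are positive inside the diagram (cell `(i,j)` with `j < sh_i`), `0` outside;
rows weakly increase, columns strictly increase. -/
structure SSYT (sh : List ℕ) where
  entry : ℕ → ℕ → ℕ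
  zero_outside : ∀ i j, sh.getD i 0 ≤ j → entry i j = 0
  pos_inside : ∀ i j, j < sh.getD i 0 → 1 ≤ entry i j
  row_weak : ∀ i j, j + 1 < sh.getD i 0 → entry i j ≤ entry i (j + 1)
  col_strict : ∀ i j, j < sh.getD (i + 1) 0 → entry i j < entry (i + 1) j

/-- The filling `f` of shape `sh` has weight `mu`: the entry `k+1` occurs `mu_{k+1}` times. -/
def WtIs (sh : List ℕ) (f : ℕ → ℕ → ℕ) (mu : List ℕ) : Prop :=
  ∀ k, {p : ℕ × ℕ | p.2 < sh.getD p.1 0 ∧ f p.1 p.2 = k + 1}.ncard = mu.getD k 0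

/-- The Kostka number `K_{ημ}`: the number of SSYT of shape `η` and weight `μ`. -/
noncomputable def kostka (eta mu : List ℕ) : ℕ :=
  Nat.card {T : SSYT eta // WtIs eta T.entry mu}

/- ### The Lascoux–Schützenberger charge -/

/-- charge of a standard word, given the positions of the letters `1, 2, …` in order:
letter 1 has index 0, and the index of `r+1` equals that of `r`, plus one if `r+1`
is located to the right of `r`; the charge is the sum of the indices. -/
def chargeStdAux : ℕ → ℕ → List ℕ → ℕ
  | _, _, [] => 0
  | prev, ind, p :: rest =>
    let ind' := if prev < p then ind + 1 else ind
    ind' + chargeStdAux p ind' rest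

def chargeStd : List ℕ → ℕ
  | [] => 0
  | p :: rest => chargeStdAux p 0 rest

/-- positions of a word of length `n`, read leftwards starting just left of `s`, cyclically. -/
def cycOrder (n s : ℕ) : List ℕ := (List.range s).reverse ++ (List.range' s (n - s)).reverse

/-- first position, leftwards-cyclically from `s`, carrying the letter `l`. -/
def findCyc (w : List ℕ) (l s : ℕ) : Option ℕ :=
  (cycOrder w.length s).find? fun i => w.getD i 0 = l

def extractAux (w : List ℕ) : ℕ → ℕ → ℕ → List ℕ
  | 0, _, _ => []
  | fuel + 1, s, l =>
    match findCyc w l s with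
    | none => []
    | some p => p :: extractAux w fuel p (l + 1)

/-- positions of the extracted standard subword: the rightmost `1`, then cyclically
leftwards the first `2`, then the first `3`, etc. -/
def extract (w : List ℕ) : List ℕ :=
  if 1 ∈ w then
    (w.length - 1 - (w.reverse.findIdx (· = 1))) ::
      extractAux w (w.foldr max 0) (w.length - 1 - (w.reverse.findIdx (· = 1))) 2
  else []

def removeIdx (w : List ℕ) (I : List ℕ) : List ℕ :=
  ((w.zipIdx.map Prod.swap).filter fun p => p.1 ∉ I).map Prod.snd

def chargeAux : ℕ → List ℕ → ℕ
  | 0, _ => 0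
  | fuel + 1, w =>
    if (extract w).isEmpty then 0
    else chargeStd (extract w) + chargeAux fuel (removeIdx w (extract w))

/-- The Lascoux–Schützenberger charge of a word (of partition weight): the sum of the
charges of the successively extracted standard subwords. -/
def charge (w : List ℕ) : ℕ := chargeAux w.length w

/-- The reading word of a tableau: rows read left to right, starting from the bottom row. -/
def readingWord {sh : List ℕ} (T : SSYT sh) : List ℕ :=
  ((List.range sh.length).reverse.map fun i =>
    (List.range (sh.getD i 0)).map fun j => T.entry i j).flatten

/-- The Kostka–Foulkes polynomial `K_{ηλ}(t) = Σ_T t^{c(T)}`, summed over all SSYT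
of shape `η` and weight `λ`, where `c` is the Lascoux–Schützenberger charge. -/
noncomputable def kostkaFoulkes (eta lam : List ℕ) : Polynomial ℤ :=
  ∑ᶠ T : {T : SSYT eta // WtIs eta T.entry lam}, Polynomial.X ^ charge (readingWord T.1)

/-- `𝒫_{λμ}(t) = Σ_η K_{ημ} K_{ηλ}(t)`, summed over all partitions `η` of `|λ|`. -/
noncomputable def Pcal (lam mu : List ℕ) : Polynomial ℤ :=
  ∑ eta ∈ partitionsOf lam.sum, (kostka eta mu : Polynomial ℤ) * kostkaFoulkes eta lam

/-- `ℛ_{λμ}(t) = Σ_η K_{ημ} K_{η'λ}(t)`, summed over all partitions `η` of `|λ|`. -/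
noncomputable def Rcal (lam mu : List ℕ) : Polynomial ℤ :=
  ∑ eta ∈ partitionsOf lam.sum,
    (kostka eta mu : Polynomial ℤ) * kostkaFoulkes (conjList eta) lam


/-- Delsarte's polynomial `α_λ(ν;q)`: for a prime `p`, `α_λ(ν;p)` is the number of
subgroups of type `ν` in a finite abelian `p`-group of type `λ`. -/
noncomputable def alphaPoly (lam nu : List ℕ) : Polynomial ℤ :=
  ∏ j ∈ Finset.Icc 1 (lam.headD 0),
    Polynomial.X ^ (conjC nu (j + 1) * (conjC lam j - conjC nu j)) *
      qbinom (conjC lam j - conjC nu (j + 1)) (conjC nu j - conjC nu (j + 1))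

/-- `α_λ({ν};q) := ∏_{i=0}^{m} α_{ν^{(i+1)}}(ν^{(i)};q)` for a chain
`0 = ν⁰ ⊆ ν¹ ⊆ ⋯ ⊆ ν^{m+1} = λ`; for a prime `p` it counts chains of subgroups
`{e} ⊆ H¹ ⊆ ⋯ ⊆ H^m ⊆ G` in a finite abelian `p`-group `G` of type `λ` with
`H^i` of type `ν^{(i)}`. -/
noncomputable def alphaChainPoly (m : ℕ) (nu : ℕ → List ℕ) : Polynomial ℤ :=
  ∏ i ∈ Finset.range (m + 1), alphaPoly (nu (i + 1)) (nu i)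

lemma qbinom_zero_right (n : ℕ) : qbinom n 0 = 1 := by cases n <;> rfl

lemma qbinom_succ_succ (n k : ℕ) :
    qbinom (n + 1) (k + 1) = qbinom n k + Polynomial.X ^ (k + 1) * qbinom n (k + 1) := rfl

lemma qbinom_of_lt : ∀ {n k : ℕ}, n < k → qbinom n k = 0
  | 0, _ + 1, _ => rfl
  | n + 1, k + 1, h => by
      rw [qbinom_succ_succ, qbinom_of_lt (by omega), qbinom_of_lt (by omega)]; ring

lemma qbinom_pascal' : ∀ n k, k ≤ n →
    qbinom (n + 1) (k + 1) = Polynomial.X ^ (n - k) * qbinom n k + qbinom n (k + 1) := by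
  intro n
  induction n with
  | zero =>
    intro k hk; interval_cases k
    rw [qbinom_succ_succ, qbinom_zero_right, qbinom_of_lt (by omega)]
    ring
  | succ n ih =>
    intro k hk
    cases k with
    | zero =>
      have h : (Polynomial.X : Polynomial ℤ) ^ n + qbinom n 1 =
          1 + Polynomial.X * qbinom n 1 := by
        have h1 := ih 0 (Nat.zero_le n)
        have h2 := qbinom_succ_succ n 0
        rw [qbinom_zero_right] at h1 h2
        rw [h2] at h1
        simpa using h1.symm
      rw [qbinom_succ_succ, qbinom_zero_right, ih 0 (Nat.zero_le n), qbinom_zero_right]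
      simp only [Nat.sub_zero, pow_one, mul_one, zero_add]
      linear_combination -h
    | succ k' =>
      rcases Nat.lt_or_ge k' n with h | h
      · conv_rhs => rw [qbinom_succ_succ n k', qbinom_succ_succ n (k' + 1)]
        conv_lhs => rw [qbinom_succ_succ (n + 1) (k' + 1), ih k' (le_of_lt h), ih (k' + 1) h]
        rw [show n + 1 - (k' + 1) = (n - (k' + 1)) + 1 from by omega,
          show n - k' = (n - (k' + 1)) + 1 from by omega]
        generalize n - (k' + 1) = a
        ring
      · have hk'n : n = k' := by omega
        subst hk'n
        rw [qbinom_succ_succ, qbinom_of_lt (Nat.lt_succ_self (n + 1)), Nat.sub_self, pow_zero]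
        ring

lemma qbinom_self : ∀ n, qbinom n n = 1
  | 0 => rfl
  | n + 1 => by
      rw [qbinom_succ_succ, qbinom_of_lt (Nat.lt_succ_self n), qbinom_self n]; ring

lemma qbinom_rev : ∀ (n k : ℕ), k ≤ n →
    (RatFunc.X : RatFunc ℚ) ^ (k * (n - k)) *
      Polynomial.aeval ((RatFunc.X : RatFunc ℚ)⁻¹) (qbinom n k) =
    Polynomial.aeval (RatFunc.X : RatFunc ℚ) (qbinom n k) := by
  have hx : (RatFunc.X : RatFunc ℚ) ≠ 0 := RatFunc.X_ne_zero
  intro n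
  induction n with
  | zero => intro k hk; interval_cases k; simp [qbinom_zero_right]
  | succ n ih =>
    intro k hk
    cases k with
    | zero => simp [qbinom_zero_right]
    | succ k' =>
      rcases Nat.lt_or_ge k' n with h | h
      · conv_rhs => rw [qbinom_pascal' n k' (le_of_lt h)]
        rw [qbinom_succ_succ]
        simp only [map_add, map_mul, map_pow, Polynomial.aeval_X]
        rw [← ih k' (le_of_lt h), ← ih (k' + 1) h]
        rw [show n + 1 - (k' + 1) = (n - (k' + 1)) + 1 from by omega,
          show n - k' = (n - (k' + 1)) + 1 from by omega]
        generalize n - (k' + 1) = a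
        field_simp
        have hk1 : ((RatFunc.X : RatFunc ℚ) * RatFunc.X⁻¹) ^ (k' + 1) = 1 := by
          rw [mul_inv_cancel₀ hx, one_pow]
        linear_combination (RatFunc.X ^ (k' * a) * RatFunc.X ^ a *
          (Polynomial.aeval (1 / (RatFunc.X : RatFunc ℚ))) (qbinom n (k' + 1))) * hk1
      · have hk'n : n = k' := by omega
        subst hk'n
        rw [Nat.sub_self, Nat.mul_zero, pow_zero, one_mul, qbinom_self]
        simp


lemma conjC_nil (j : ℕ) : conjC [] j = 0 := rfl

lemma conjC_eq_sum (l : List ℕ) : ∀ (n : ℕ), l.length ≤ n → ∀ j, 1 ≤ j →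
    conjC l j = ∑ k ∈ Finset.range n, if j ≤ l.getD k 0 then 1 else 0 := by
  induction l with
  | nil =>
    intro n _ j hj
    simp [conjC, List.getD, Nat.not_le_of_lt hj]
  | cons x t iht =>
    intro n hn j hj
    cases n with
    | zero => simp at hn
    | succ n' =>
      rw [Finset.sum_range_succ']
      simp only [List.getD_cons_succ, List.getD_cons_zero]
      rw [← iht n' (by simpa using hn) j hj]
      simp only [conjC, List.filter_cons]
      by_cases hjx : j ≤ x <;> simp [hjx, Nat.add_comm]

lemma conjC_mono_list {p q : List ℕ} (h : ∀ k, p.getD k 0 ≤ q.getD k 0) {j : ℕ} (hj : 1 ≤ j) :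
    conjC p j ≤ conjC q j := by
  rw [conjC_eq_sum p (max p.length q.length) (le_max_left _ _) j hj,
    conjC_eq_sum q (max p.length q.length) (le_max_right _ _) j hj]
  refine Finset.sum_le_sum fun k _ => ?_
  have := h k
  split <;> split <;> omega

lemma conjC_anti (l : List ℕ) {j j' : ℕ} (hj : 1 ≤ j) (hjj : j ≤ j') :
    conjC l j' ≤ conjC l j := by
  rw [conjC_eq_sum l l.length le_rfl j hj,
    conjC_eq_sum l l.length le_rfl j' (le_trans hj hjj)]
  refine Finset.sum_le_sum fun k _ => ?_
  split <;> split <;> omega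

lemma conjC_eq_zero_of_lt {l : List ℕ} {j : ℕ} (h : ∀ v ∈ l, v < j) : conjC l j = 0 := by
  simp only [conjC, List.length_eq_zero_iff, List.filter_eq_nil_iff]
  intro a ha
  simpa using Nat.not_le_of_lt (h a ha)

lemma mem_le_head {l : List ℕ} (hs : l.Pairwise (· ≥ ·)) {v : ℕ} (hv : v ∈ l) :
    v ≤ l.headD 0 := by
  cases l with
  | nil => simp at hv
  | cons x t =>
    rcases List.mem_cons.1 hv with rfl | hvt
    · simp
    · exact (List.pairwise_cons.1 hs).1 v hvt

lemma conjC_eq_zero_of_head_lt {l : List ℕ} (hs : l.Pairwise (· ≥ ·)) {j : ℕ}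
    (hj : l.headD 0 < j) : conjC l j = 0 :=
  conjC_eq_zero_of_lt fun v hv => lt_of_le_of_lt (mem_le_head hs hv) hj

lemma lt_conjC_iff {l : List ℕ} (hs : l.Pairwise (· ≥ ·)) :
    ∀ {k : ℕ}, k < l.length → ∀ {j : ℕ}, 1 ≤ j → (k < conjC l j ↔ j ≤ l.getD k 0) := by
  induction l with
  | nil => intro k hk; simp at hk
  | cons x t iht =>
    intro k hk j hj
    have hs' : t.Pairwise (· ≥ ·) := (List.pairwise_cons.1 hs).2
    have hcons : conjC (x :: t) j = conjC t j + (if j ≤ x then 1 else 0) := by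
      simp only [conjC, List.filter_cons]
      by_cases hjx : j ≤ x <;> simp [hjx, Nat.add_comm]
    by_cases hjx : j ≤ x
    · cases k with
      | zero => simp [hcons, hjx]
      | succ k' =>
        rw [hcons, List.getD_cons_succ]
        simp only [hjx, if_true]
        rw [← iht hs' (by simpa using hk) hj]
        omega
    · have ht0 : conjC t j = 0 := by
        refine conjC_eq_zero_of_lt fun v hv => ?_
        have := (List.pairwise_cons.1 hs).1 v hv
        omega
      rw [hcons, ht0]
      simp only [hjx, if_false]
      cases k with
      | zero => simp [hjx]
      | succ k' =>
        rw [List.getD_cons_succ]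
        have hk' : k' < t.length := by simpa using hk
        have : t.getD k' 0 ∈ t := by
          rw [List.getD_eq_getElem _ _ hk']
          exact List.getElem_mem _
        have := (List.pairwise_cons.1 hs).1 _ this
        constructor <;> intro <;> omega

lemma sum_range_id_choose (t : ℕ) : ∑ k ∈ Finset.range t, k = t.choose 2 := by
  induction t with
  | zero => rfl
  | succ t ih =>
    rw [Finset.sum_range_succ, ih]
    have h2 : (t + 1).choose 2 = t.choose 1 + t.choose 2 := Nat.choose_succ_succ t 1
    rw [h2, Nat.choose_one_right]
    omega

lemma choose_two_add (s d : ℕ) : (s + d).choose 2 = s.choose 2 + s * d + d.choose 2 := by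
  induction d with
  | zero => simp
  | succ d ih =>
    have h2 : (s + d + 1).choose 2 = (s + d).choose 1 + (s + d).choose 2 :=
      Nat.choose_succ_succ (s + d) 1
    have h3 : (d + 1).choose 2 = d.choose 1 + d.choose 2 := Nat.choose_succ_succ d 1
    rw [show s + (d + 1) = (s + d) + 1 from rfl, h2, Nat.choose_one_right, ih, h3,
      Nat.choose_one_right]
    ring

lemma telescope (g : ℕ → ℕ) : ∀ m : ℕ, g 0 = 0 → (∀ i ≤ m, g i ≤ g (i + 1)) →
    ∑ i ∈ Finset.range (m + 1), (g i * (g (i + 1) - g i) + (g (i + 1) - g i).choose 2) =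
      (g (m + 1)).choose 2 := by
  intro m
  induction m with
  | zero => intro h0 _; simp [h0]
  | succ m ih =>
    intro h0 hmono
    rw [Finset.sum_range_succ, ih h0 (fun i hi => hmono i (by omega))]
    have h1 : g (m + 1) ≤ g (m + 2) := hmono (m + 1) le_rfl
    obtain ⟨d, hd⟩ : ∃ d, g (m + 2) = g (m + 1) + d := ⟨g (m + 2) - g (m + 1), by omega⟩
    rw [hd, Nat.add_sub_cancel_left, choose_two_add]
    ring

lemma getD_le_head {l : List ℕ} (hs : l.Pairwise (· ≥ ·)) (k : ℕ) :
    l.getD k 0 ≤ l.headD 0 := by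
  by_cases h : k < l.length
  · refine mem_le_head hs ?_
    rw [List.getD_eq_getElem _ _ h]
    exact List.getElem_mem _
  · rw [List.getD_eq_default _ _ (by omega)]
    exact Nat.zero_le _

lemma nstat_eq (l : List ℕ) (hs : l.Pairwise (· ≥ ·)) :
    nstat l = ∑ j ∈ Finset.Icc 1 (l.headD 0), (conjC l j).choose 2 := by
  have step1 : ∀ j, (conjC l j).choose 2 =
      ∑ k ∈ Finset.range l.length, if k < conjC l j then k else 0 := by
    intro j
    have hle : conjC l j ≤ l.length := List.length_filter_le _ _
    calc (conjC l j).choose 2 = ∑ k ∈ Finset.range (conjC l j), k :=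
          (sum_range_id_choose _).symm
      _ = ∑ k ∈ Finset.range (conjC l j), (if k < conjC l j then k else 0) :=
          Finset.sum_congr rfl fun k hk => by simp [Finset.mem_range.1 hk]
      _ = ∑ k ∈ Finset.range l.length, (if k < conjC l j then k else 0) := by
          refine Finset.sum_subset (Finset.range_subset_range.2 hle) fun k _ hk => ?_
          rw [Finset.mem_range] at hk
          simp only [if_neg (by omega : ¬ k < conjC l j)]
  rw [Finset.sum_congr rfl fun j _ => step1 j, Finset.sum_comm]
  refine Finset.sum_congr rfl fun k hk => ?_
  rw [Finset.mem_range] at hk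
  have hv : l.getD k 0 ≤ l.headD 0 := getD_le_head hs k
  symm
  calc ∑ j ∈ Finset.Icc 1 (l.headD 0), (if k < conjC l j then k else 0)
      = ∑ j ∈ Finset.Icc 1 (l.headD 0), (if j ≤ l.getD k 0 then k else 0) := by
        refine Finset.sum_congr rfl fun j hj => ?_
        rw [Finset.mem_Icc] at hj
        rw [if_congr (lt_conjC_iff hs hk hj.1) rfl rfl]
    _ = ∑ j ∈ Finset.Icc 1 (l.getD k 0), (if j ≤ l.getD k 0 then k else 0) := by
        refine (Finset.sum_subset (Finset.Icc_subset_Icc le_rfl hv) fun j hj hj' => ?_).symm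
        rw [Finset.mem_Icc] at hj hj'
        rw [if_neg (by omega)]
    _ = ∑ j ∈ Finset.Icc 1 (l.getD k 0), k := by
        refine Finset.sum_congr rfl fun j hj => ?_
        rw [Finset.mem_Icc] at hj
        rw [if_pos hj.2]
    _ = k * l.getD k 0 := by
        rw [Finset.sum_const, Nat.card_Icc, smul_eq_mul, Nat.add_sub_cancel]
        ring



lemma key_term (a b c : ℕ) (hba : b ≤ a) (hcb : c ≤ b) :
    (RatFunc.X : RatFunc ℚ) ^ (b * (a - b)) *
      (((RatFunc.X : RatFunc ℚ)⁻¹) ^ (c * (a - b)) *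
        Polynomial.aeval ((RatFunc.X : RatFunc ℚ)⁻¹) (qbinom (a - c) (b - c))) =
    Polynomial.aeval (RatFunc.X : RatFunc ℚ) (qbinom (a - c) (b - c)) := by
  have hx : (RatFunc.X : RatFunc ℚ) ≠ 0 := RatFunc.X_ne_zero
  have hrev := qbinom_rev (a - c) (b - c) (by omega)
  rw [show (b - c) * (a - c - (b - c)) = (b - c) * (a - b) from by congr 1; omega] at hrev
  rw [← hrev, show b * (a - b) = (b - c) * (a - b) + c * (a - b) from by
    rw [← Nat.add_mul]; congr 1; omega]
  rw [pow_add, inv_pow, mul_assoc, mul_inv_cancel_left₀ (pow_ne_zero _ hx)]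

lemma headD_eq_getD (l : List ℕ) : l.headD 0 = l.getD 0 0 := by cases l <;> rfl

lemma alphaPoly_extend (lam' nu' : List ℕ) (H : ℕ) (hH : lam'.headD 0 ≤ H)
    (hs : lam'.Pairwise (· ≥ ·)) (hmono : ∀ j, 1 ≤ j → conjC nu' j ≤ conjC lam' j) :
    alphaPoly lam' nu' = ∏ j ∈ Finset.Icc 1 H,
      Polynomial.X ^ (conjC nu' (j + 1) * (conjC lam' j - conjC nu' j)) *
        qbinom (conjC lam' j - conjC nu' (j + 1)) (conjC nu' j - conjC nu' (j + 1)) := by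
  unfold alphaPoly
  refine Finset.prod_subset (Finset.Icc_subset_Icc le_rfl hH) fun j hj hj' => ?_
  rw [Finset.mem_Icc] at hj hj'
  have h1 : conjC lam' j = 0 := conjC_eq_zero_of_head_lt hs (by omega)
  have h2 : conjC nu' j = 0 := by have := hmono j hj.1; omega
  have h3 : conjC nu' (j + 1) = 0 := by
    have := conjC_anti nu' hj.1 (show j ≤ j + 1 by omega); omega
  rw [h1, h2, h3]
  simp [qbinom_zero_right]


/-- For a chain of partitions `{ν} = {0 = ν⁰ ⊆ ν¹ ⊆ ⋯ ⊆ ν^{m+1} = λ}`,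
as an identity of rational functions in `q`,
`q^{n(λ)} α_λ({ν}; q⁻¹) = q^{c(ν)} ∏_{i=1}^{m} ∏_{j≥1} [(ν^{(i+1)})'_j − (ν^{(i)})'_{j+1}
choose (ν^{(i)})'_j − (ν^{(i)})'_{j+1}]_q`, where
`c(ν) = Σ_{i=0}^{m} Σ_{j≥1} C((ν^{(i+1)})'_j − (ν^{(i)})'_j, 2)`. -/
theorem stmt4 (m : ℕ) (lam : List ℕ) (nu : ℕ → List ℕ)
    (hpart : ∀ k ≤ m + 1, (nu k).Pairwise (· ≥ ·) ∧ ∀ x ∈ nu k, 0 < x)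
    (h0 : nu 0 = []) (htop : nu (m + 1) = lam)
    (hchain : ∀ k ≤ m, ∀ i, (nu k).getD i 0 ≤ (nu (k + 1)).getD i 0) :
    (RatFunc.X : RatFunc ℚ) ^ nstat lam *
        Polynomial.aeval ((RatFunc.X : RatFunc ℚ)⁻¹) (alphaChainPoly m nu) =
      (RatFunc.X : RatFunc ℚ) ^
          (∑ i ∈ Finset.range (m + 1), ∑ j ∈ Finset.Icc 1 (lam.headD 0),
            Nat.choose (conjC (nu (i + 1)) j - conjC (nu i) j) 2) *
        ∏ i ∈ Finset.Icc 1 m, ∏ j ∈ Finset.Icc 1 (lam.headD 0),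
          Polynomial.aeval (RatFunc.X : RatFunc ℚ)
            (qbinom (conjC (nu (i + 1)) j - conjC (nu i) (j + 1))
              (conjC (nu i) j - conjC (nu i) (j + 1))) := by
  have hx : (RatFunc.X : RatFunc ℚ) ≠ 0 := RatFunc.X_ne_zero
  have hlam_sorted : lam.Pairwise (· ≥ ·) := htop ▸ (hpart (m + 1) le_rfl).1
  -- monotonicity of conjugates along the chain
  have hba : ∀ i ≤ m, ∀ j, 1 ≤ j → conjC (nu i) j ≤ conjC (nu (i + 1)) j :=
    fun i hi j hj => conjC_mono_list (hchain i hi) hj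
  -- heads are bounded by the head of lam
  have hstep : ∀ k ≤ m, (nu k).headD 0 ≤ (nu (k + 1)).headD 0 := fun k hk => by
    rw [headD_eq_getD, headD_eq_getD]; exact hchain k hk 0
  have aux : ∀ d k, k + d ≤ m + 1 → (nu k).headD 0 ≤ (nu (k + d)).headD 0 := by
    intro d
    induction d with
    | zero => intro k _; simp
    | succ d ihd =>
      intro k h
      have h2 := hstep (k + d) (by omega)
      have h3 : k + (d + 1) = (k + d) + 1 := by omega
      rw [h3]
      exact le_trans (ihd k (by omega)) h2
  have hhead : ∀ k ≤ m + 1, (nu k).headD 0 ≤ lam.headD 0 := by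
    intro k hk
    have := aux (m + 1 - k) k (by omega)
    rwa [show k + (m + 1 - k) = m + 1 from by omega, htop] at this
  -- extended product form of alphaChainPoly
  have hchainpoly : alphaChainPoly m nu = ∏ i ∈ Finset.range (m + 1),
      ∏ j ∈ Finset.Icc 1 (lam.headD 0),
        (Polynomial.X ^ (conjC (nu i) (j + 1) * (conjC (nu (i + 1)) j - conjC (nu i) j)) *
          qbinom (conjC (nu (i + 1)) j - conjC (nu i) (j + 1))
            (conjC (nu i) j - conjC (nu i) (j + 1))) := by
    unfold alphaChainPoly
    refine Finset.prod_congr rfl fun i hi => ?_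
    rw [Finset.mem_range] at hi
    exact alphaPoly_extend (nu (i + 1)) (nu i) _ (hhead (i + 1) (by omega))
      ((hpart (i + 1) (by omega)).1) (fun j hj => hba i (by omega) j hj)
  -- nstat decomposition
  have hnstat : nstat lam =
      (∑ i ∈ Finset.range (m + 1), ∑ j ∈ Finset.Icc 1 (lam.headD 0),
        Nat.choose (conjC (nu (i + 1)) j - conjC (nu i) j) 2) +
      ∑ i ∈ Finset.range (m + 1), ∑ j ∈ Finset.Icc 1 (lam.headD 0),
        conjC (nu i) j * (conjC (nu (i + 1)) j - conjC (nu i) j) := by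
    rw [nstat_eq lam hlam_sorted]
    have hj : ∀ j ∈ Finset.Icc 1 (lam.headD 0), (conjC lam j).choose 2 =
        ∑ i ∈ Finset.range (m + 1),
          (conjC (nu i) j * (conjC (nu (i + 1)) j - conjC (nu i) j) +
            (conjC (nu (i + 1)) j - conjC (nu i) j).choose 2) := by
      intro j hjm
      rw [Finset.mem_Icc] at hjm
      have := telescope (fun i => conjC (nu i) j) m
        (by show conjC (nu 0) j = 0; rw [h0]; exact conjC_nil j)
        (fun i hi => hba i hi j hjm.1)
      simp only [htop] at this
      exact this.symm
    rw [Finset.sum_congr rfl hj, Finset.sum_comm]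
    rw [Finset.sum_congr rfl fun i (_ : i ∈ Finset.range (m + 1)) => Finset.sum_add_distrib]
    rw [Finset.sum_add_distrib, Nat.add_comm]
  rw [hnstat, pow_add, mul_assoc]
  congr 1
  -- main product identity
  have hmain : (RatFunc.X : RatFunc ℚ) ^
      (∑ i ∈ Finset.range (m + 1), ∑ j ∈ Finset.Icc 1 (lam.headD 0),
        conjC (nu i) j * (conjC (nu (i + 1)) j - conjC (nu i) j)) *
      Polynomial.aeval ((RatFunc.X : RatFunc ℚ)⁻¹) (alphaChainPoly m nu) =
      ∏ i ∈ Finset.range (m + 1), ∏ j ∈ Finset.Icc 1 (lam.headD 0),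
        Polynomial.aeval (RatFunc.X : RatFunc ℚ)
          (qbinom (conjC (nu (i + 1)) j - conjC (nu i) (j + 1))
            (conjC (nu i) j - conjC (nu i) (j + 1))) := by
    rw [hchainpoly]
    simp only [map_prod, map_mul, map_pow, Polynomial.aeval_X]
    rw [← Finset.prod_pow_eq_pow_sum, ← Finset.prod_mul_distrib]
    refine Finset.prod_congr rfl fun i hi => ?_
    rw [Finset.mem_range] at hi
    rw [← Finset.prod_pow_eq_pow_sum, ← Finset.prod_mul_distrib]
    refine Finset.prod_congr rfl fun j hj => ?_
    rw [Finset.mem_Icc] at hj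
    have h1 : conjC (nu i) j ≤ conjC (nu (i + 1)) j := hba i (by omega) j hj.1
    have h2 : conjC (nu i) (j + 1) ≤ conjC (nu i) j := conjC_anti (nu i) hj.1 (Nat.le_succ j)
    exact key_term _ _ _ h1 h2
  rw [hmain]
  -- drop the i = 0 factor
  have hins : Finset.range (m + 1) = insert 0 (Finset.Icc 1 m) := by
    ext i; simp [Finset.mem_Icc, Finset.mem_range]; omega
  rw [hins, Finset.prod_insert (by simp)]
  have h0fac : (∏ j ∈ Finset.Icc 1 (lam.headD 0),
      Polynomial.aeval (RatFunc.X : RatFunc ℚ)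
        (qbinom (conjC (nu (0 + 1)) j - conjC (nu 0) (j + 1))
          (conjC (nu 0) j - conjC (nu 0) (j + 1)))) = 1 := by
    refine Finset.prod_eq_one fun j _ => ?_
    rw [h0]
    simp [conjC_nil, qbinom_zero_right]
  rw [h0fac, one_mul]

end KHL
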